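/- Let $a, b$ be nonnegative integers, and let $f, g, t_1, t_3$ be nonnegative integers with $f, g \le \min(a,b)$, $t_1 \le a - f - g$, $t_3 \le b - f - g$, not all of $f, g, t_1, t_3$ zero. Define $T(f,g,t_1,t_3) = \sum_{u=0}^{\min(a,b)} \sum_{r=0}^{a-u} \sum_{s=0}^{b-u} \sum_{y=0}^{\min(a-u-r,\,b-u-s)} \sum_{x=0}^{\min(r,s)} (-1)^{r+s} (v-v^{-1})^u \, v^{2(fr+gs) - u(u+1)/2 + u(f-x+t_1) - x(2g+f+t_3) + y(g+t_3) + t_3 s - s + t_1 r - r} \begin{bmatrix} t_3 \\ s-x-g+y \end{bmatrix} \begin{bmatrix} t_1 \\ r-f+u \end{bmatrix} \dfrac{1}{[g]!\,[f-u]!} \begin{bmatrix} g \\ y \end{bmatrix} \begin{bmatrix} f-u \\ x \end{bmatrix}$, where terms with $f - u < 0$ are omitted and Gaussian binomials with out-of-range lower index are $0$. Then $T(f,g,t_1,t_3) = 0$. Moreover $T(0,0,0,0) = 1$. -/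

import Mathlib

noncomputable section

abbrev K : Type := RatFunc ℚ

/-- The indeterminate `v` in `ℚ(v)`. -/
def v : K := RatFunc.X

/-- Quantum integer `[m] = (v^m - v^{-m})/(v - v^{-1})`. -/
def qint (m : ℤ) : K := (v ^ m - v ^ (-m)) / (v - v⁻¹)

/-- Quantum factorial `[r]! = ∏_{i=1}^r [i]`. -/
def qfact (r : ℕ) : K := ∏ i ∈ Finset.range r, qint ((i : ℤ) + 1)

/-- Quantum double factorial `[2r]!! = ∏_{i=1}^r [2i]`. -/
def qdfact (r : ℕ) : K := ∏ i ∈ Finset.range r, qint (2 * ((i : ℤ) + 1))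

/-- Balanced Gaussian binomial coefficient `[m][m-1]⋯[m-r+1]/[r]!`. -/
def qbinom (m : ℤ) (r : ℕ) : K := (∏ i ∈ Finset.range r, qint (m - (i : ℤ))) / qfact r

/-- Gaussian binomial with integer lower index, vanishing for negative lower index. -/
def qbinomZ (m r : ℤ) : K := if 0 ≤ r then qbinom m r.toNat else 0

/-- The quintuple sum $T(f,g,t_1,t_3)$ (depending also on $a,b$). -/
def Tsum (a b f g t1 t3 : ℕ) : K :=
  ∑ u ∈ Finset.range (min a b + 1), ∑ r ∈ Finset.range (a - u + 1),
    ∑ s ∈ Finset.range (b - u + 1),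
      ∑ y ∈ Finset.range (min (a - u - r) (b - u - s) + 1),
        ∑ x ∈ Finset.range (min r s + 1),
          if u ≤ f then
            (-1 : K) ^ (r + s) * (v - v⁻¹) ^ u *
              v ^ (2 * ((f : ℤ) * r + (g : ℤ) * s)
                    - (u : ℤ) * ((u : ℤ) + 1) / 2
                    + (u : ℤ) * ((f : ℤ) - x + t1)
                    - (x : ℤ) * (2 * (g : ℤ) + f + t3)
                    + (y : ℤ) * ((g : ℤ) + t3)
                    + (t3 : ℤ) * s - (s : ℤ) + (t1 : ℤ) * r - (r : ℤ)) *
              qbinomZ (t3 : ℤ) ((s : ℤ) - x - g + y) *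
              qbinomZ (t1 : ℤ) ((r : ℤ) - f + u) *
              (1 / (qfact g * qfact (f - u))) *
              qbinom (g : ℤ) y * qbinom ((f : ℤ) - u) x
          else 0

lemma hv : (v : K) ≠ 0 := RatFunc.X_ne_zero

lemma v_pow_ne_one {n : ℕ} (hn : n ≠ 0) : (v : K) ^ n ≠ 1 := by
  intro h
  have : (Polynomial.X : Polynomial ℚ) ^ n = 1 := by
    apply RatFunc.algebraMap_injective ℚ
    simpa [v, RatFunc.algebraMap_X] using h
  have := congrArg Polynomial.natDegree this
  simp [Polynomial.natDegree_X_pow] at this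
  exact hn this

lemma hvv : (v : K) - v⁻¹ ≠ 0 := by
  intro h
  have h2 : (v : K) ^ 2 = 1 := by
    have hval : (v : K) = v⁻¹ := by linear_combination h
    have := congrArg (· * v) hval
    simpa [inv_mul_cancel₀ hv, sq] using this
  exact v_pow_ne_one (by norm_num) h2

lemma v_zpow_ne_zero (m : ℤ) : (v : K) ^ m ≠ 0 := zpow_ne_zero m hv

lemma qint_zero : qint 0 = 0 := by simp [qint]

lemma qint_ne_zero {m : ℤ} (h : 0 < m) : qint m ≠ 0 := by
  have hnum : (v : K) ^ m - v ^ (-m) ≠ 0 := by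
    intro hh
    have h1 : (v : K) ^ m = v ^ (-m) := by linear_combination hh
    have h2 : (v : K) ^ (2 * m) = 1 := by
      have h4 : (v:K) ^ (-m) * v ^ m = 1 := by
        rw [← zpow_add₀ hv, show -m + m = 0 by ring, zpow_zero]
      rw [← h1] at h4
      rw [show 2 * m = m + m by ring, zpow_add₀ hv, h4]
    have h3 : (v : K) ^ ((2 * m).toNat) = 1 := by
      rw [← zpow_natCast, Int.toNat_of_nonneg (by omega)]; exact h2
    exact v_pow_ne_one (by omega) h3
  exact div_ne_zero hnum hvv

lemma qfact_ne_zero (r : ℕ) : qfact r ≠ 0 := by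
  unfold qfact
  apply Finset.prod_ne_zero_iff.2
  intro i _
  exact qint_ne_zero (by positivity)

lemma qbinom_eq_zero {m : ℤ} {r : ℕ} (hm : 0 ≤ m) (h : m < r) : qbinom m r = 0 := by
  unfold qbinom
  rw [Finset.prod_eq_zero (i := m.toNat) (by simp [Finset.mem_range]; omega)]
  · simp
  · rw [Int.toNat_of_nonneg hm, show m - m = 0 by ring, qint_zero]

lemma qbinomZ_neg {m r : ℤ} (h : r < 0) : qbinomZ m r = 0 := by
  simp [qbinomZ, not_le.2 h]

lemma qbinomZ_gt {m r : ℤ} (hm : 0 ≤ m) (h : m < r) : qbinomZ m r = 0 := by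
  unfold qbinomZ
  split
  · exact qbinom_eq_zero hm (by omega)
  · rfl

lemma qbinomZ_of_nonneg {m r : ℤ} (h : 0 ≤ r) : qbinomZ m r = qbinom m r.toNat := by
  simp [qbinomZ, h]

lemma qfact_succ (r : ℕ) : qfact (r + 1) = qfact r * qint ((r : ℤ) + 1) := by
  unfold qfact
  rw [Finset.prod_range_succ]

lemma prod_qint_mul_qfact {N k : ℕ} (h : k ≤ N) :
    (∏ i ∈ Finset.range k, qint ((N : ℤ) - i)) * qfact (N - k) = qfact N := by
  induction k with
  | zero => simp
  | succ k ih =>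
    have hk : k ≤ N := by omega
    rw [Finset.prod_range_succ]
    have e1 : N - k = (N - (k + 1)) + 1 := by omega
    have e2 : qfact (N - k) = qfact (N - (k + 1)) * qint ((N : ℤ) - k) := by
      rw [e1, qfact_succ]
      have ec : ((N - (k+1) : ℕ) : ℤ) + 1 = (N : ℤ) - k := by omega
      rw [ec]
    calc (∏ i ∈ Finset.range k, qint ((N : ℤ) - i)) * qint ((N : ℤ) - k) * qfact (N - (k + 1))
        = (∏ i ∈ Finset.range k, qint ((N : ℤ) - i)) * (qfact (N - (k + 1)) * qint ((N : ℤ) - k)) := by ring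
      _ = (∏ i ∈ Finset.range k, qint ((N : ℤ) - i)) * qfact (N - k) := by rw [← e2]
      _ = qfact N := ih hk

lemma qbinom_nat_eq {N k : ℕ} (h : k ≤ N) :
    qbinom (N : ℤ) k = qfact N / (qfact k * qfact (N - k)) := by
  unfold qbinom
  rw [← prod_qint_mul_qfact h]
  field_simp [qfact_ne_zero]

lemma qint_split (N k : ℤ) : qint N = v ^ k * qint (N - k) + v ^ (k - N) * qint k := by
  unfold qint
  rw [← mul_div_assoc, ← mul_div_assoc, ← add_div]
  congr 1
  rw [mul_sub, mul_sub, ← zpow_add₀ hv, ← zpow_add₀ hv, ← zpow_add₀ hv, ← zpow_add₀ hv]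
  rw [show k + (N - k) = N by ring, show k + -(N - k) = k - (N - k) by ring,
    show k - N + k = k - (N - k) by ring, show k - N + -k = -N by ring]
  ring

lemma pascal (n x : ℕ) :
    qbinom ((n : ℤ) + 1) (x + 1)
      = v ^ ((x : ℤ) + 1) * qbinom (n : ℤ) (x + 1) + v ^ ((x : ℤ) - n) * qbinom (n : ℤ) x := by
  rcases lt_or_ge n x with hlt | hge
  · -- x > n : everything vanishes
    rw [qbinom_eq_zero (by positivity) (by push_cast; omega),
        qbinom_eq_zero (by positivity) (by push_cast; omega),
        qbinom_eq_zero (by positivity) (by push_cast; omega)]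
    ring
  · rcases eq_or_lt_of_le hge with heq | hlt
    · -- x = n
      subst heq
      rw [qbinom_eq_zero (m := (x:ℤ)) (by positivity) (by push_cast; omega)]
      have c1 : ((x : ℤ) + 1) = ((x + 1 : ℕ) : ℤ) := by push_cast; ring
      rw [c1, qbinom_nat_eq (le_refl (x+1)), qbinom_nat_eq (le_refl x)]
      have q0 : qfact 0 = 1 := by simp [qfact]
      simp only [Nat.sub_self, sub_self, zpow_zero, one_mul, mul_zero, zero_add]
      rw [q0, mul_one, mul_one, div_self (qfact_ne_zero _), div_self (qfact_ne_zero _)]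
    · -- x < n
      have hx1 : x + 1 ≤ n := hlt
      have c1 : ((n : ℤ) + 1) = ((n + 1 : ℕ) : ℤ) := by push_cast; ring
      rw [c1, qbinom_nat_eq (by omega : x + 1 ≤ n + 1), qbinom_nat_eq hx1,
        qbinom_nat_eq (by omega : x ≤ n)]
      have e1 : n + 1 - (x + 1) = n - x := by omega
      have e2 : n - x = (n - x - 1) + 1 := by omega
      rw [e1, qfact_succ n, qfact_succ x]
      have e3 : qfact (n - x) = qfact (n - x - 1) * qint ((n : ℤ) - x) := by
        rw [e2, qfact_succ]
        have ec : ((n - x - 1 : ℕ) : ℤ) + 1 = (n : ℤ) - x := by omega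
        rw [ec]
        norm_num
      have e4 : n - (x + 1) = n - x - 1 := by omega
      rw [e3, e4]
      have split := qint_split ((n : ℤ) + 1) ((x : ℤ) + 1)
      rw [show (n : ℤ) + 1 - ((x : ℤ) + 1) = (n : ℤ) - x by ring,
        show (x : ℤ) + 1 - ((n : ℤ) + 1) = (x : ℤ) - n by ring] at split
      rw [split]
      have h1 := qfact_ne_zero x
      have h2 := qfact_ne_zero (n - x - 1)
      have h3 := qint_ne_zero (show (0:ℤ) < (x:ℤ) + 1 by positivity)
      have h4 := qint_ne_zero (show (0:ℤ) < (n:ℤ) - x by push_cast; omega)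
      field_simp

lemma qfact_zero : qfact 0 = 1 := by simp [qfact]

lemma qbinom_r_zero (m : ℤ) : qbinom m 0 = 1 := by simp [qbinom, qfact_zero]

def Wsum (n : ℕ) (t : ℤ) : K :=
  ∑ y ∈ Finset.range (n + 1), (-1 : K) ^ y * v ^ (((n : ℤ) - 1 + t) * (y : ℤ)) * qbinom (n : ℤ) y

lemma Wsum_zero (t : ℤ) : Wsum 0 t = 1 := by
  simp [Wsum, qbinom_r_zero]

lemma Wsum_succ (n : ℕ) (t : ℤ) : Wsum (n + 1) t = (1 - v ^ t) * Wsum n (t + 2) := by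
  set G : ℕ → K := fun y => (-1 : K) ^ y * v ^ (((n : ℤ) + t + 1) * (y : ℤ)) * qbinom (n : ℤ) y
    with hG
  have hW' : Wsum n (t + 2) = ∑ y ∈ Finset.range (n + 1), G y := by
    unfold Wsum
    apply Finset.sum_congr rfl
    intro y _
    simp only [hG]
    congr 2
    ring
  have hG0 : G 0 = 1 := by simp [hG, qbinom_r_zero]
  have hGn : G (n + 1) = 0 := by
    simp only [hG]
    rw [qbinom_eq_zero (by positivity) (by push_cast; omega)]
    ring
  have hsplit : Wsum (n + 1) t
      = (∑ y ∈ Finset.range (n + 1), (G (y + 1) - v ^ t * G y)) + 1 := by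
    unfold Wsum
    rw [Finset.sum_range_succ']
    congr 1
    · apply Finset.sum_congr rfl
      intro y _
      have hc : ((n + 1 : ℕ) : ℤ) = (n : ℤ) + 1 := by push_cast; ring
      rw [hc, pascal n y]
      have za : v ^ (((n:ℤ) + 1 - 1 + t) * ((y:ℤ) + 1)) * v ^ ((y:ℤ) + 1)
          = v ^ (((n:ℤ) + t + 1) * ((y:ℤ) + 1)) := by
        rw [← zpow_add₀ hv]; congr 1; ring
      have zb : v ^ (((n:ℤ) + 1 - 1 + t) * ((y:ℤ) + 1)) * v ^ ((y:ℤ) - n)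
          = v ^ t * v ^ (((n:ℤ) + t + 1) * (y:ℤ)) := by
        rw [← zpow_add₀ hv, ← zpow_add₀ hv]; congr 1; ring
      have hcy : ((y + 1 : ℕ) : ℤ) = (y : ℤ) + 1 := by push_cast; ring
      simp only [hG, hcy]
      calc (-1:K) ^ (y+1) * v ^ (((n:ℤ) + 1 - 1 + t) * ((y:ℤ) + 1))
            * (v ^ ((y:ℤ) + 1) * qbinom (n:ℤ) (y + 1) + v ^ ((y:ℤ) - n) * qbinom (n:ℤ) y)
          = (-1:K)^(y+1) * (v ^ (((n:ℤ) + 1 - 1 + t) * ((y:ℤ) + 1)) * v ^ ((y:ℤ) + 1)) * qbinom (n:ℤ) (y+1)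
            + (-1:K)^(y+1) * (v ^ (((n:ℤ) + 1 - 1 + t) * ((y:ℤ) + 1)) * v ^ ((y:ℤ) - n)) * qbinom (n:ℤ) y := by
            ring
        _ = (-1:K)^(y+1) * v ^ (((n:ℤ) + t + 1) * ((y:ℤ)+1)) * qbinom (n:ℤ) (y+1)
            + (-1:K)^(y+1) * (v ^ t * v ^ (((n:ℤ) + t + 1) * (y:ℤ))) * qbinom (n:ℤ) y := by
            rw [za, zb]
        _ = (-1:K)^(y+1) * v ^ (((n:ℤ) + t + 1) * ((y:ℤ)+1)) * qbinom (n:ℤ) (y+1)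
            - v ^ t * ((-1:K)^y * v ^ (((n:ℤ) + t + 1) * (y:ℤ)) * qbinom (n:ℤ) y) := by
            rw [pow_succ]
            ring
    · have hc : ((n + 1 : ℕ) : ℤ) = (n : ℤ) + 1 := by push_cast; ring
      simp [qbinom_r_zero]
  have h1 : ∑ y ∈ Finset.range (n + 1), G (y + 1)
      = (∑ y ∈ Finset.range (n + 1), G y) - 1 := by
    have e1 := Finset.sum_range_succ' G (n + 1)
    have e2 := Finset.sum_range_succ G (n + 1)
    rw [hG0] at e1
    rw [hGn] at e2
    linear_combination e2 - e1
  rw [hsplit, Finset.sum_sub_distrib, ← Finset.mul_sum, h1, ← hW']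
  ring

lemma Wsum_eq_prod (n : ℕ) : ∀ t : ℤ, Wsum n t = ∏ k ∈ Finset.range n, (1 - v ^ (t + 2 * (k : ℤ))) := by
  induction n with
  | zero => intro t; simp [Wsum_zero]
  | succ n ih =>
    intro t
    rw [Wsum_succ, ih (t + 2), Finset.prod_range_succ']
    have : ∀ k ∈ Finset.range n, (1 - v ^ (t + 2 + 2 * (k:ℤ))) = (1 - v ^ (t + 2 * ((k:ℤ) + 1))) := by
      intro k _
      congr 2
      ring
    rw [Finset.prod_congr rfl this]
    have h0 : (1 : K) - v ^ (t + 2 * ((0:ℕ):ℤ)) = 1 - v ^ t := by norm_num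
    rw [mul_comm]
    congr 1
    exact h0.symm

lemma two_mul_tri (u : ℤ) : 2 * (u * (u + 1) / 2) = u * (u + 1) := by
  rcases Int.even_mul_succ_self u with ⟨c, hc⟩
  omega

lemma sum_range_cast_two (n : ℕ) : (∑ k ∈ Finset.range n, (k : ℤ)) * 2 = (n : ℤ) * ((n : ℤ) - 1) := by
  induction n with
  | zero => simp
  | succ n ih =>
    rw [Finset.sum_range_succ]
    push_cast
    linear_combination ih

lemma one_sub_v_factor (fz k : ℤ) :
    (1 : K) - v ^ (-(2 * fz) + 2 * k) = v ^ (k - fz) * (v - v⁻¹) * qint (fz - k) := by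
  rw [qint, mul_assoc,
    mul_comm (v - v⁻¹) ((v ^ (fz - k) - v ^ (-(fz - k))) / (v - v⁻¹)),
    div_mul_cancel₀ _ hvv]
  rw [mul_sub, ← zpow_add₀ hv, ← zpow_add₀ hv]
  rw [show k - fz + (fz - k) = 0 by ring, show k - fz + -(fz - k) = -(2*fz) + 2*k by ring]
  rw [zpow_zero]

lemma prod_form (n : ℕ) (fz : ℤ) :
    ∏ k ∈ Finset.range n, ((1:K) - v ^ (-(2 * fz) + 2 * (k : ℤ)))
      = (v - v⁻¹) ^ n * v ^ (∑ k ∈ Finset.range n, ((k : ℤ) - fz))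
        * ∏ k ∈ Finset.range n, qint (fz - (k : ℤ)) := by
  induction n with
  | zero => simp
  | succ n ih =>
    rw [Finset.prod_range_succ, ih, Finset.prod_range_succ, Finset.sum_range_succ,
      one_sub_v_factor, zpow_add₀ hv (∑ k ∈ Finset.range n, ((k : ℤ) - fz)) ((n : ℤ) - fz),
      pow_succ]
    ring

def Fux (f : ℕ) (u x : ℕ) : K :=
  (-1 : K) ^ (u + x) * (v - v⁻¹) ^ u
    * v ^ ((u : ℤ) * (1 - (f : ℤ)) - (u : ℤ) * ((u : ℤ) + 1) / 2 - (x : ℤ) * ((u : ℤ) + (f : ℤ) + 1))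
    * (1 / qfact (f - u)) * qbinom ((f : ℤ) - (u : ℤ)) x

def Usum (f : ℕ) : K := ∑ u ∈ Finset.range (f + 1), ∑ x ∈ Finset.range (f - u + 1), Fux f u x

lemma Usum_eq (f : ℕ) :
    Usum f = (v - v⁻¹) ^ f * v ^ (-((f : ℤ) * ((f : ℤ) + 1) / 2)) * Wsum f (2 - 2 * (f : ℤ)) := by
  unfold Usum Wsum
  rw [mul_assoc, Finset.mul_sum, Finset.mul_sum]
  apply Finset.sum_congr rfl
  intro u hu
  have hu' : u ≤ f := by simpa [Nat.lt_succ_iff] using hu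
  have hcast : ((f - u : ℕ) : ℤ) = (f : ℤ) - u := by omega
  have hinner : ∑ x ∈ Finset.range (f - u + 1), Fux f u x
      = ((-1 : K) ^ u * (v - v⁻¹) ^ u
          * v ^ ((u : ℤ) * (1 - (f : ℤ)) - (u : ℤ) * ((u : ℤ) + 1) / 2) * (1 / qfact (f - u)))
        * Wsum (f - u) (-(2 * (f : ℤ))) := by
    unfold Wsum
    rw [Finset.mul_sum]
    apply Finset.sum_congr rfl
    intro x _
    unfold Fux
    rw [hcast]
    have hz : v ^ ((u : ℤ) * (1 - (f : ℤ)) - (u : ℤ) * ((u : ℤ) + 1) / 2 - (x : ℤ) * ((u : ℤ) + (f : ℤ) + 1))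
        = v ^ ((u : ℤ) * (1 - (f : ℤ)) - (u : ℤ) * ((u : ℤ) + 1) / 2)
          * v ^ (((f : ℤ) - (u:ℤ) - 1 + -(2 * (f : ℤ))) * (x : ℤ)) := by
      rw [← zpow_add₀ hv]
      congr 1
      ring
    rw [hz, pow_add]
    ring
  rw [hinner, Wsum_eq_prod]
  have hprodc : ∀ k ∈ Finset.range (f - u), ((1:K) - v ^ (-(2 * (f:ℤ)) + 2 * (k:ℤ)))
      = (1:K) - v ^ (-(2 * (f:ℤ)) + 2 * (k:ℤ)) := fun _ _ => rfl
  rw [prod_form (f - u) (f : ℤ)]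
  set S := ∑ k ∈ Finset.range (f - u), ((k : ℤ) - (f : ℤ)) with hS
  set D1 := (u : ℤ) * ((u : ℤ) + 1) / 2 with hD1
  set D2 := (f : ℤ) * ((f : ℤ) + 1) / 2 with hD2
  have h2S : S * 2 = (u:ℤ) * ((u:ℤ) + 1) - (f:ℤ) * ((f:ℤ) + 1) := by
    rw [hS, Finset.sum_sub_distrib, Finset.sum_const, Finset.card_range, nsmul_eq_mul]
    have e1 := sum_range_cast_two (f - u)
    rw [hcast] at e1 ⊢
    linear_combination e1
  have h1 := two_mul_tri (u : ℤ)
  have h2 := two_mul_tri (f : ℤ)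
  rw [← hD1] at h1
  rw [← hD2] at h2
  have hexp : (u : ℤ) * (1 - (f : ℤ)) - D1 + S = -D2 + ((f:ℤ) - 1 + (2 - 2 * (f:ℤ))) * (u:ℤ) := by
    have h2e : 2 * ((u : ℤ) * (1 - (f : ℤ)) - D1 + S) = 2 * (-D2 + ((f:ℤ) - 1 + (2 - 2 * (f:ℤ))) * (u:ℤ)) := by
      linear_combination h2S - h1 + h2
    omega
  have hvmul : v ^ ((u : ℤ) * (1 - (f : ℤ)) - D1) * v ^ S
      = v ^ (-D2) * v ^ (((f:ℤ) - 1 + (2 - 2 * (f:ℤ))) * (u:ℤ)) := by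
    rw [← zpow_add₀ hv, ← zpow_add₀ hv]
    exact congrArg (fun z : ℤ => (v:K) ^ z) (by linear_combination hexp)
  have hpow : (v - v⁻¹) ^ u * (v - v⁻¹) ^ (f - u) = (v - v⁻¹) ^ f := by
    rw [← pow_add]
    congr 1
    omega
  have hp := prod_qint_mul_qfact (show f - u ≤ f by omega)
  rw [show f - (f - u) = u by omega] at hp
  have hPd : (∏ k ∈ Finset.range (f - u), qint ((f:ℤ) - (k:ℤ))) = qfact f / qfact u := by
    rw [eq_div_iff (qfact_ne_zero u)]
    exact hp
  rw [hPd, qbinom_nat_eq hu']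
  calc (-1:K)^u * (v-v⁻¹)^u * v ^ ((u:ℤ)*(1-(f:ℤ)) - D1) * (1/qfact (f-u)) *
        ((v-v⁻¹)^(f-u) * v ^ S * (qfact f / qfact u))
      = ((v-v⁻¹)^u * (v-v⁻¹)^(f-u)) * (v ^ ((u:ℤ)*(1-(f:ℤ)) - D1) * v ^ S) *
        ((-1:K)^u * (1/qfact (f-u)) * (qfact f / qfact u)) := by ring
    _ = (v-v⁻¹)^f * (v ^ (-D2) * v ^ (((f:ℤ)-1+(2-2*(f:ℤ)))*(u:ℤ))) *
        ((-1:K)^u * (1/qfact (f-u)) * (qfact f / qfact u)) := by rw [hpow, hvmul]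
    _ = (v-v⁻¹)^f * (v ^ (-D2) * ((-1:K)^u * v ^ (((f:ℤ)-1+(2-2*(f:ℤ)))*(u:ℤ)) *
        (qfact f / (qfact u * qfact (f-u))))) := by ring

lemma Wsum_vanish_y (n : ℕ) (hn : 1 ≤ n) : Wsum n (2 - 2 * (n : ℤ)) = 0 := by
  rw [Wsum_eq_prod]
  apply Finset.prod_eq_zero (i := n - 1) (by simp [Finset.mem_range]; omega)
  rw [show 2 - 2 * (n:ℤ) + 2 * ((n - 1 : ℕ) : ℤ) = 0 by omega, zpow_zero, sub_self]

lemma Wsum_vanish_t (n : ℕ) (hn : 1 ≤ n) : Wsum n 0 = 0 := by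
  rw [Wsum_eq_prod]
  apply Finset.prod_eq_zero (i := 0) (by simp [Finset.mem_range]; omega)
  norm_num

lemma Usum_vanish (f : ℕ) (hf : 1 ≤ f) : Usum f = 0 := by
  rw [Usum_eq, Wsum_vanish_y f hf, mul_zero]

lemma Usum_zero : Usum 0 = 1 := by
  rw [Usum_eq, Wsum_zero]
  norm_num

def tm (f g t1 t3 : ℕ) (u r s y x : ℕ) : K :=
  (-1 : K) ^ (r + s) * (v - v⁻¹) ^ u *
    v ^ (2 * ((f : ℤ) * r + (g : ℤ) * s)
          - (u : ℤ) * ((u : ℤ) + 1) / 2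
          + (u : ℤ) * ((f : ℤ) - x + t1)
          - (x : ℤ) * (2 * (g : ℤ) + f + t3)
          + (y : ℤ) * ((g : ℤ) + t3)
          + (t3 : ℤ) * s - (s : ℤ) + (t1 : ℤ) * r - (r : ℤ)) *
    qbinomZ (t3 : ℤ) ((s : ℤ) - x - g + y) *
    qbinomZ (t1 : ℤ) ((r : ℤ) - f + u) *
    (1 / (qfact g * qfact (f - u))) *
    qbinom (g : ℤ) y * qbinom ((f : ℤ) - u) x

section vanish
variable (f g t1 t3 u r s y x : ℕ)

lemma tm_zero_x (hu : u ≤ f) (h : f - u < x) : tm f g t1 t3 u r s y x = 0 := by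
  unfold tm
  rw [qbinom_eq_zero (m := (f:ℤ) - u) (by omega) (by omega)]
  ring

lemma tm_zero_y (h : g < y) : tm f g t1 t3 u r s y x = 0 := by
  unfold tm
  rw [qbinom_eq_zero (m := (g:ℤ)) (by positivity) (by omega)]
  ring

lemma tm_zero_r_low (h : (r : ℤ) - f + u < 0) : tm f g t1 t3 u r s y x = 0 := by
  unfold tm
  rw [qbinomZ_neg h]
  ring

lemma tm_zero_r_high (h : (t1 : ℤ) < (r : ℤ) - f + u) : tm f g t1 t3 u r s y x = 0 := by
  unfold tm
  rw [qbinomZ_gt (by positivity) h]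
  ring

lemma tm_zero_s_low (h : (s : ℤ) - x - g + y < 0) : tm f g t1 t3 u r s y x = 0 := by
  unfold tm
  rw [qbinomZ_neg h]
  ring

lemma tm_zero_s_high (h : (t3 : ℤ) < (s : ℤ) - x - g + y) : tm f g t1 t3 u r s y x = 0 := by
  unfold tm
  rw [qbinomZ_gt (by positivity) h]
  ring

end vanish

lemma stage1 (a b f g t1 t3 : ℕ) (hf : f ≤ min a b) :
    Tsum a b f g t1 t3
      = ∑ u ∈ Finset.range (f + 1), ∑ r ∈ Finset.range (a - u + 1),
          ∑ s ∈ Finset.range (b - u + 1),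
            ∑ y ∈ Finset.range (min (a - u - r) (b - u - s) + 1),
              ∑ x ∈ Finset.range (min r s + 1), tm f g t1 t3 u r s y x := by
  unfold Tsum
  rw [← Finset.sum_subset (Finset.range_subset_range.2 (show f + 1 ≤ min a b + 1 by omega))
      (by
        intro u _ hu
        have huf : ¬ (u ≤ f) := by
          simp only [Finset.mem_range] at hu
          omega
        refine Finset.sum_eq_zero fun r _ => Finset.sum_eq_zero fun s _ =>
          Finset.sum_eq_zero fun y _ => Finset.sum_eq_zero fun x _ => ?_
        rw [if_neg huf])]
  refine Finset.sum_congr rfl fun u hu => ?_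
  have huf : u ≤ f := by
    simp only [Finset.mem_range] at hu
    omega
  refine Finset.sum_congr rfl fun r _ => Finset.sum_congr rfl fun s _ =>
    Finset.sum_congr rfl fun y _ => Finset.sum_congr rfl fun x _ => ?_
  rw [if_pos huf]
  rfl

lemma stage2 (a b f g t1 t3 : ℕ) (hf : f ≤ min a b) (hg : g ≤ min a b)
    (ht1 : t1 + f + g ≤ a) (ht3 : t3 + f + g ≤ b) :
    Tsum a b f g t1 t3
      = ∑ u ∈ Finset.range (f + 1), ∑ r ∈ Finset.range (a + b + 2),
          ∑ s ∈ Finset.range (a + b + 2),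
            ∑ y ∈ Finset.range (a + b + 2),
              ∑ x ∈ Finset.range (a + b + 2), tm f g t1 t3 u r s y x := by
  rw [stage1 a b f g t1 t3 hf]
  refine Finset.sum_congr rfl fun u hu => ?_
  have huf : u ≤ f := by simp only [Finset.mem_range] at hu; omega
  have hfa : f ≤ a := by omega
  have hfb : f ≤ b := by omega
  have hga : g ≤ a := by omega
  have hgb : g ≤ b := by omega
  calc ∑ r ∈ Finset.range (a - u + 1), ∑ s ∈ Finset.range (b - u + 1),
        ∑ y ∈ Finset.range (min (a - u - r) (b - u - s) + 1),
          ∑ x ∈ Finset.range (min r s + 1), tm f g t1 t3 u r s y x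
      = ∑ r ∈ Finset.range (a + b + 2), ∑ s ∈ Finset.range (b - u + 1),
          ∑ y ∈ Finset.range (min (a - u - r) (b - u - s) + 1),
            ∑ x ∈ Finset.range (min r s + 1), tm f g t1 t3 u r s y x := by
        apply Finset.sum_subset (Finset.range_subset_range.2 (by omega))
        intro r _ hr
        simp only [Finset.mem_range] at hr
        refine Finset.sum_eq_zero fun s _ => Finset.sum_eq_zero fun y _ =>
          Finset.sum_eq_zero fun x _ => ?_
        exact tm_zero_r_high f g t1 t3 u r s y x (by omega)
    _ = ∑ r ∈ Finset.range (a + b + 2), ∑ s ∈ Finset.range (a + b + 2),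
          ∑ y ∈ Finset.range (min (a - u - r) (b - u - s) + 1),
            ∑ x ∈ Finset.range (min r s + 1), tm f g t1 t3 u r s y x := by
        refine Finset.sum_congr rfl fun r _ => ?_
        apply Finset.sum_subset (Finset.range_subset_range.2 (by omega))
        intro s _ hs
        simp only [Finset.mem_range] at hs
        refine Finset.sum_eq_zero fun y _ => Finset.sum_eq_zero fun x _ => ?_
        by_cases hxc : f - u < x
        · exact tm_zero_x f g t1 t3 u r s y x huf hxc
        · exact tm_zero_s_high f g t1 t3 u r s y x (by omega)
    _ = ∑ r ∈ Finset.range (a + b + 2), ∑ s ∈ Finset.range (a + b + 2),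
          ∑ y ∈ Finset.range (a + b + 2),
            ∑ x ∈ Finset.range (min r s + 1), tm f g t1 t3 u r s y x := by
        refine Finset.sum_congr rfl fun r _ => Finset.sum_congr rfl fun s _ => ?_
        apply Finset.sum_subset (Finset.range_subset_range.2 (by omega))
        intro y _ hy
        simp only [Finset.mem_range] at hy
        refine Finset.sum_eq_zero fun x _ => ?_
        by_cases hyg : g < y
        · exact tm_zero_y f g t1 t3 u r s y x hyg
        · by_cases hxc : f - u < x
          · exact tm_zero_x f g t1 t3 u r s y x huf hxc
          · by_cases hcase : a - u - r < y
            · exact tm_zero_r_high f g t1 t3 u r s y x (by omega)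
            · exact tm_zero_s_high f g t1 t3 u r s y x (by omega)
    _ = ∑ r ∈ Finset.range (a + b + 2), ∑ s ∈ Finset.range (a + b + 2),
          ∑ y ∈ Finset.range (a + b + 2),
            ∑ x ∈ Finset.range (a + b + 2), tm f g t1 t3 u r s y x := by
        refine Finset.sum_congr rfl fun r hr => Finset.sum_congr rfl fun s hs =>
          Finset.sum_congr rfl fun y _ => ?_
        simp only [Finset.mem_range] at hr hs
        apply Finset.sum_subset (Finset.range_subset_range.2 (by omega))
        intro x _ hx
        simp only [Finset.mem_range] at hx
        by_cases hxc : f - u < x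
        · exact tm_zero_x f g t1 t3 u r s y x huf hxc
        · by_cases hyg : g < y
          · exact tm_zero_y f g t1 t3 u r s y x hyg
          · by_cases hrx : r < x
            · exact tm_zero_r_low f g t1 t3 u r s y x (by omega)
            · exact tm_zero_s_low f g t1 t3 u r s y x (by omega)

lemma sum_comm4 {M1 M2 M3 M4 : Finset ℕ} (F : ℕ → ℕ → ℕ → ℕ → K) :
    (∑ r ∈ M1, ∑ s ∈ M2, ∑ y ∈ M3, ∑ x ∈ M4, F r s y x)
      = ∑ x ∈ M4, ∑ y ∈ M3, ∑ r ∈ M1, ∑ s ∈ M2, F r s y x := by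
  calc (∑ r ∈ M1, ∑ s ∈ M2, ∑ y ∈ M3, ∑ x ∈ M4, F r s y x)
      = ∑ r ∈ M1, ∑ s ∈ M2, ∑ x ∈ M4, ∑ y ∈ M3, F r s y x := by
        exact Finset.sum_congr rfl fun r _ => Finset.sum_congr rfl fun s _ => Finset.sum_comm
    _ = ∑ r ∈ M1, ∑ x ∈ M4, ∑ s ∈ M2, ∑ y ∈ M3, F r s y x := by
        exact Finset.sum_congr rfl fun r _ => Finset.sum_comm
    _ = ∑ x ∈ M4, ∑ r ∈ M1, ∑ s ∈ M2, ∑ y ∈ M3, F r s y x := Finset.sum_comm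
    _ = ∑ x ∈ M4, ∑ r ∈ M1, ∑ y ∈ M3, ∑ s ∈ M2, F r s y x := by
        exact Finset.sum_congr rfl fun x _ => Finset.sum_congr rfl fun r _ => Finset.sum_comm
    _ = ∑ x ∈ M4, ∑ y ∈ M3, ∑ r ∈ M1, ∑ s ∈ M2, F r s y x := by
        exact Finset.sum_congr rfl fun x _ => Finset.sum_comm

lemma stage3 (a b f g t1 t3 : ℕ) (hf : f ≤ min a b) (hg : g ≤ min a b)
    (ht1 : t1 + f + g ≤ a) (ht3 : t3 + f + g ≤ b) :
    Tsum a b f g t1 t3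
      = ∑ u ∈ Finset.range (f + 1), ∑ x ∈ Finset.range (f - u + 1),
          ∑ y ∈ Finset.range (g + 1), ∑ r ∈ Finset.range (t1 + 1),
            ∑ s ∈ Finset.range (t3 + 1),
              tm f g t1 t3 u (f - u + r) (g + x - y + s) y x := by
  rw [stage2 a b f g t1 t3 hf hg ht1 ht3]
  refine Finset.sum_congr rfl fun u hu => ?_
  have huf : u ≤ f := by simp only [Finset.mem_range] at hu; omega
  have hfa : f ≤ a := by omega
  have hgb : g ≤ b := by omega
  rw [sum_comm4 (fun r s y x => tm f g t1 t3 u r s y x)]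
  calc (∑ x ∈ Finset.range (a + b + 2), ∑ y ∈ Finset.range (a + b + 2),
        ∑ r ∈ Finset.range (a + b + 2), ∑ s ∈ Finset.range (a + b + 2),
          tm f g t1 t3 u r s y x)
      = ∑ x ∈ Finset.range (f - u + 1), ∑ y ∈ Finset.range (a + b + 2),
          ∑ r ∈ Finset.range (a + b + 2), ∑ s ∈ Finset.range (a + b + 2),
            tm f g t1 t3 u r s y x := by
        refine (Finset.sum_subset (Finset.range_subset_range.2 (by omega)) ?_).symm
        intro x _ hx
        simp only [Finset.mem_range] at hx
        refine Finset.sum_eq_zero fun y _ => Finset.sum_eq_zero fun r _ =>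
          Finset.sum_eq_zero fun s _ => ?_
        exact tm_zero_x f g t1 t3 u r s y x huf (by omega)
    _ = ∑ x ∈ Finset.range (f - u + 1), ∑ y ∈ Finset.range (g + 1),
          ∑ r ∈ Finset.range (a + b + 2), ∑ s ∈ Finset.range (a + b + 2),
            tm f g t1 t3 u r s y x := by
        refine Finset.sum_congr rfl fun x _ => ?_
        refine (Finset.sum_subset (Finset.range_subset_range.2 (by omega)) ?_).symm
        intro y _ hy
        simp only [Finset.mem_range] at hy
        refine Finset.sum_eq_zero fun r _ => Finset.sum_eq_zero fun s _ => ?_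
        exact tm_zero_y f g t1 t3 u r s y x (by omega)
    _ = ∑ x ∈ Finset.range (f - u + 1), ∑ y ∈ Finset.range (g + 1),
          ∑ r ∈ Finset.Ico (f - u) (f - u + t1 + 1), ∑ s ∈ Finset.range (a + b + 2),
            tm f g t1 t3 u r s y x := by
        refine Finset.sum_congr rfl fun x _ => Finset.sum_congr rfl fun y _ => ?_
        refine (Finset.sum_subset ?_ ?_).symm
        · intro z hz
          simp only [Finset.mem_Ico] at hz
          simp only [Finset.mem_range]
          omega
        · intro r _ hr
          simp only [Finset.mem_Ico] at hr
          refine Finset.sum_eq_zero fun s _ => ?_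
          by_cases hlow : r < f - u
          · exact tm_zero_r_low f g t1 t3 u r s y x (by omega)
          · exact tm_zero_r_high f g t1 t3 u r s y x (by omega)
    _ = ∑ x ∈ Finset.range (f - u + 1), ∑ y ∈ Finset.range (g + 1),
          ∑ r ∈ Finset.range (t1 + 1), ∑ s ∈ Finset.range (a + b + 2),
            tm f g t1 t3 u (f - u + r) s y x := by
        refine Finset.sum_congr rfl fun x _ => Finset.sum_congr rfl fun y _ => ?_
        rw [Finset.sum_Ico_eq_sum_range]
        rw [show f - u + t1 + 1 - (f - u) = t1 + 1 by omega]
    _ = ∑ x ∈ Finset.range (f - u + 1), ∑ y ∈ Finset.range (g + 1),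
          ∑ r ∈ Finset.range (t1 + 1), ∑ s ∈ Finset.Ico (g + x - y) (g + x - y + t3 + 1),
            tm f g t1 t3 u (f - u + r) s y x := by
        refine Finset.sum_congr rfl fun x hx => Finset.sum_congr rfl fun y hy =>
          Finset.sum_congr rfl fun r _ => ?_
        simp only [Finset.mem_range] at hx hy
        refine (Finset.sum_subset ?_ ?_).symm
        · intro z hz
          simp only [Finset.mem_Ico] at hz
          simp only [Finset.mem_range]
          omega
        · intro s _ hs
          simp only [Finset.mem_Ico] at hs
          by_cases hlow : s < g + x - y
          · exact tm_zero_s_low f g t1 t3 u (f - u + r) s y x (by omega)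
          · exact tm_zero_s_high f g t1 t3 u (f - u + r) s y x (by omega)
    _ = ∑ x ∈ Finset.range (f - u + 1), ∑ y ∈ Finset.range (g + 1),
          ∑ r ∈ Finset.range (t1 + 1), ∑ s ∈ Finset.range (t3 + 1),
            tm f g t1 t3 u (f - u + r) (g + x - y + s) y x := by
        refine Finset.sum_congr rfl fun x _ => Finset.sum_congr rfl fun y _ =>
          Finset.sum_congr rfl fun r _ => ?_
        rw [Finset.sum_Ico_eq_sum_range]
        rw [show g + x - y + t3 + 1 - (g + x - y) = t3 + 1 by omega]

lemma qbinomZ_natCast (m : ℤ) (r : ℕ) : qbinomZ m (r : ℤ) = qbinom m r := by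
  rw [qbinomZ_of_nonneg (by positivity), Int.toNat_natCast]

lemma neg_one_pow_shift {A B k : ℕ} (h : A + 2 * k = B) : (-1 : K) ^ B = (-1 : K) ^ A := by
  rw [← h, pow_add, pow_mul]
  norm_num

lemma tm_formula (f g t1 t3 u x y r s : ℕ) (hu : u ≤ f) (hx : x ≤ f - u) (hy : y ≤ g) :
    tm f g t1 t3 u (f - u + r) (g + x - y + s) y x
      = ((-1 : K) ^ (f + g)
          * v ^ (2 * (f : ℤ) * f + 2 * (g : ℤ) * g + (t3 : ℤ) * g - g + (t1 : ℤ) * f - f)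
          * (1 / qfact g))
        * Fux f u x
        * ((-1 : K) ^ y * v ^ (((g : ℤ) - 1 + (2 - 2 * (g : ℤ))) * (y : ℤ)) * qbinom (g : ℤ) y)
        * ((-1 : K) ^ r * v ^ (((t1 : ℤ) - 1 + 2 * (f : ℤ)) * (r : ℤ)) * qbinom (t1 : ℤ) r)
        * ((-1 : K) ^ s * v ^ (((t3 : ℤ) - 1 + 2 * (g : ℤ)) * (s : ℤ)) * qbinom (t3 : ℤ) s) := by
  unfold tm Fux
  have hr1 : ((f - u + r : ℕ) : ℤ) - f + u = (r : ℤ) := by omega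
  have hs1 : ((g + x - y + s : ℕ) : ℤ) - x - g + y = (s : ℤ) := by omega
  rw [hr1, hs1, qbinomZ_natCast, qbinomZ_natCast]
  have hsign : (-1 : K) ^ ((f - u + r) + (g + x - y + s))
      = (-1 : K) ^ (f + g) * (-1 : K) ^ (u + x) * (-1 : K) ^ y * (-1 : K) ^ r * (-1 : K) ^ s := by
    rw [← neg_one_pow_shift (show ((f - u + r) + (g + x - y + s)) + 2 * (u + y)
        = (f + g) + (u + x) + y + r + s by omega)]
    rw [pow_add, pow_add, pow_add, pow_add]
  rw [hsign]
  have hcr : ((f - u + r : ℕ) : ℤ) = (f : ℤ) - u + r := by omega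
  have hcs : ((g + x - y + s : ℕ) : ℤ) = (g : ℤ) + x - y + s := by omega
  have hvE : v ^ (2 * ((f : ℤ) * ((f - u + r : ℕ) : ℤ) + (g : ℤ) * ((g + x - y + s : ℕ) : ℤ))
          - (u : ℤ) * ((u : ℤ) + 1) / 2
          + (u : ℤ) * ((f : ℤ) - x + t1)
          - (x : ℤ) * (2 * (g : ℤ) + f + t3)
          + (y : ℤ) * ((g : ℤ) + t3)
          + (t3 : ℤ) * ((g + x - y + s : ℕ) : ℤ) - ((g + x - y + s : ℕ) : ℤ)
          + (t1 : ℤ) * ((f - u + r : ℕ) : ℤ) - ((f - u + r : ℕ) : ℤ))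
      = v ^ (2 * (f : ℤ) * f + 2 * (g : ℤ) * g + (t3 : ℤ) * g - g + (t1 : ℤ) * f - f)
        * v ^ ((u : ℤ) * (1 - (f : ℤ)) - (u : ℤ) * ((u : ℤ) + 1) / 2 - (x : ℤ) * ((u : ℤ) + (f : ℤ) + 1))
        * v ^ (((g : ℤ) - 1 + (2 - 2 * (g : ℤ))) * (y : ℤ))
        * v ^ (((t1 : ℤ) - 1 + 2 * (f : ℤ)) * (r : ℤ))
        * v ^ (((t3 : ℤ) - 1 + 2 * (g : ℤ)) * (s : ℤ)) := by
    rw [← zpow_add₀ hv, ← zpow_add₀ hv, ← zpow_add₀ hv, ← zpow_add₀ hv]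
    apply congrArg (fun z : ℤ => (v : K) ^ z)
    rw [hcr, hcs]
    generalize (u : ℤ) * ((u : ℤ) + 1) / 2 = D
    ring
  rw [hvE]
  ring

lemma Tsum_eq (a b f g t1 t3 : ℕ) (hf : f ≤ min a b) (hg : g ≤ min a b)
    (ht1 : t1 + f + g ≤ a) (ht3 : t3 + f + g ≤ b) :
    Tsum a b f g t1 t3
      = ((-1 : K) ^ (f + g)
          * v ^ (2 * (f : ℤ) * f + 2 * (g : ℤ) * g + (t3 : ℤ) * g - g + (t1 : ℤ) * f - f)
          * (1 / qfact g))
        * Usum f * Wsum g (2 - 2 * (g : ℤ)) * Wsum t1 (2 * (f : ℤ)) * Wsum t3 (2 * (g : ℤ)) := by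
  set C0 : K := (-1 : K) ^ (f + g)
      * v ^ (2 * (f : ℤ) * f + 2 * (g : ℤ) * g + (t3 : ℤ) * g - g + (t1 : ℤ) * f - f)
      * (1 / qfact g) with hC0
  rw [stage3 a b f g t1 t3 hf hg ht1 ht3]
  calc (∑ u ∈ Finset.range (f + 1), ∑ x ∈ Finset.range (f - u + 1),
        ∑ y ∈ Finset.range (g + 1), ∑ r ∈ Finset.range (t1 + 1),
          ∑ s ∈ Finset.range (t3 + 1),
            tm f g t1 t3 u (f - u + r) (g + x - y + s) y x)
      = ∑ u ∈ Finset.range (f + 1), ∑ x ∈ Finset.range (f - u + 1),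
          ∑ y ∈ Finset.range (g + 1), ∑ r ∈ Finset.range (t1 + 1),
            ∑ s ∈ Finset.range (t3 + 1),
              C0 * Fux f u x
                * ((-1 : K) ^ y * v ^ (((g : ℤ) - 1 + (2 - 2 * (g : ℤ))) * (y : ℤ)) * qbinom (g : ℤ) y)
                * ((-1 : K) ^ r * v ^ (((t1 : ℤ) - 1 + 2 * (f : ℤ)) * (r : ℤ)) * qbinom (t1 : ℤ) r)
                * ((-1 : K) ^ s * v ^ (((t3 : ℤ) - 1 + 2 * (g : ℤ)) * (s : ℤ)) * qbinom (t3 : ℤ) s) := by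
        refine Finset.sum_congr rfl fun u hu => Finset.sum_congr rfl fun x hx =>
          Finset.sum_congr rfl fun y hy => Finset.sum_congr rfl fun r _ =>
          Finset.sum_congr rfl fun s _ => ?_
        simp only [Finset.mem_range] at hu hx hy
        exact tm_formula f g t1 t3 u x y r s (by omega) (by omega) (by omega)
    _ = ∑ u ∈ Finset.range (f + 1), ∑ x ∈ Finset.range (f - u + 1),
          ∑ y ∈ Finset.range (g + 1), ∑ r ∈ Finset.range (t1 + 1),
            (C0 * Fux f u x
              * ((-1 : K) ^ y * v ^ (((g : ℤ) - 1 + (2 - 2 * (g : ℤ))) * (y : ℤ)) * qbinom (g : ℤ) y)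
              * ((-1 : K) ^ r * v ^ (((t1 : ℤ) - 1 + 2 * (f : ℤ)) * (r : ℤ)) * qbinom (t1 : ℤ) r))
              * Wsum t3 (2 * (g : ℤ)) := by
        refine Finset.sum_congr rfl fun u _ => Finset.sum_congr rfl fun x _ =>
          Finset.sum_congr rfl fun y _ => Finset.sum_congr rfl fun r _ => ?_
        rw [← Finset.mul_sum]
        rfl
    _ = ∑ u ∈ Finset.range (f + 1), ∑ x ∈ Finset.range (f - u + 1),
          ∑ y ∈ Finset.range (g + 1),
            (C0 * Fux f u x
              * ((-1 : K) ^ y * v ^ (((g : ℤ) - 1 + (2 - 2 * (g : ℤ))) * (y : ℤ)) * qbinom (g : ℤ) y))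
              * Wsum t1 (2 * (f : ℤ)) * Wsum t3 (2 * (g : ℤ)) := by
        refine Finset.sum_congr rfl fun u _ => Finset.sum_congr rfl fun x _ =>
          Finset.sum_congr rfl fun y _ => ?_
        rw [← Finset.sum_mul, ← Finset.mul_sum]
        rfl
    _ = ∑ u ∈ Finset.range (f + 1), ∑ x ∈ Finset.range (f - u + 1),
          (C0 * Fux f u x) * Wsum g (2 - 2 * (g : ℤ)) * Wsum t1 (2 * (f : ℤ))
            * Wsum t3 (2 * (g : ℤ)) := by
        refine Finset.sum_congr rfl fun u _ => Finset.sum_congr rfl fun x _ => ?_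
        rw [← Finset.sum_mul, ← Finset.sum_mul, ← Finset.mul_sum]
        rfl
    _ = (∑ u ∈ Finset.range (f + 1), ∑ x ∈ Finset.range (f - u + 1), C0 * Fux f u x)
          * Wsum g (2 - 2 * (g : ℤ)) * Wsum t1 (2 * (f : ℤ)) * Wsum t3 (2 * (g : ℤ)) := by
        calc ∑ u ∈ Finset.range (f + 1), ∑ x ∈ Finset.range (f - u + 1),
              (C0 * Fux f u x) * Wsum g (2 - 2 * (g:ℤ)) * Wsum t1 (2 * (f:ℤ)) * Wsum t3 (2 * (g:ℤ))
            = ∑ u ∈ Finset.range (f + 1),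
                (∑ x ∈ Finset.range (f - u + 1), C0 * Fux f u x) * Wsum g (2 - 2 * (g:ℤ))
                  * Wsum t1 (2 * (f:ℤ)) * Wsum t3 (2 * (g:ℤ)) := by
              refine Finset.sum_congr rfl fun u _ => ?_
              rw [← Finset.sum_mul, ← Finset.sum_mul, ← Finset.sum_mul]
          _ = _ := by rw [← Finset.sum_mul, ← Finset.sum_mul, ← Finset.sum_mul]
    _ = C0 * Usum f * Wsum g (2 - 2 * (g : ℤ)) * Wsum t1 (2 * (f : ℤ)) * Wsum t3 (2 * (g : ℤ)) := by
        unfold Usum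
        refine congrArg (· * Wsum t3 (2 * (g:ℤ))) ?_
        refine congrArg (· * Wsum t1 (2 * (f:ℤ))) ?_
        refine congrArg (· * Wsum g (2 - 2 * (g:ℤ))) ?_
        calc ∑ u ∈ Finset.range (f+1), ∑ x ∈ Finset.range (f-u+1), C0 * Fux f u x
            = ∑ u ∈ Finset.range (f+1), C0 * ∑ x ∈ Finset.range (f-u+1), Fux f u x :=
              Finset.sum_congr rfl fun u _ => (Finset.mul_sum _ _ _).symm
          _ = _ := (Finset.mul_sum _ _ _).symm


theorem stmt15 (a b f g t1 t3 : ℕ)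
    (hf : f ≤ min a b) (hg : g ≤ min a b)
    (ht1 : t1 + f + g ≤ a) (ht3 : t3 + f + g ≤ b)
    (hne : ¬(f = 0 ∧ g = 0 ∧ t1 = 0 ∧ t3 = 0)) :
    Tsum a b f g t1 t3 = 0 ∧ Tsum a b 0 0 0 0 = 1 := by
  constructor
  · rw [Tsum_eq a b f g t1 t3 hf hg ht1 ht3]
    by_cases hf1 : 1 ≤ f
    · rw [Usum_vanish f hf1]; ring
    · have hf0 : f = 0 := by omega
      by_cases hg1 : 1 ≤ g
      · rw [Wsum_vanish_y g hg1]; ring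
      · have hg0 : g = 0 := by omega
        by_cases ht11 : 1 ≤ t1
        · subst hf0
          rw [show (2 * ((0:ℕ):ℤ)) = (0:ℤ) by norm_num, Wsum_vanish_t t1 ht11]
          ring
        · have ht31 : 1 ≤ t3 := by omega
          subst hg0
          rw [show (2 * ((0:ℕ):ℤ)) = (0:ℤ) by norm_num, Wsum_vanish_t t3 ht31]
          ring
  · rw [Tsum_eq a b 0 0 0 0 (by omega) (by omega) (by omega) (by omega)]
    norm_num [Usum_zero, Wsum_zero, qfact_zero]
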